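/- Let Ω ⊂ ℝⁿ be a bounded Lipschitz (or smooth) domain and D ⋐ Ω a subdomain with Ω \ D̄ connected. Suppose ξ ∈ C²(Ω \ D̄) ∩ C¹(closure) satisfies Δξ = g·f in Ω \ D̄ where f is real-valued and nonnegative, g is harmonic in Ω \ D̄ with g = 0 on ∂D, and ξ = 0 on ∂D, ξ = ∂ξ/∂ν = 0 on ∂Ω. If additionally f > 0 on Ω \ D̄ except on a set of measure zero, then g ≡ 0 in Ω \ D̄. -/

import Mathlib

open MeasureTheory Complex

/-- Laplacian via second directional derivatives along coordinate directions. -/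
noncomputable def lap {n : ℕ} (u : EuclideanSpace ℝ (Fin n) → ℂ)
    (x : EuclideanSpace ℝ (Fin n)) : ℂ :=
  ∑ i : Fin n, deriv (deriv (fun t : ℝ => u (x + t • EuclideanSpace.single i (1 : ℝ)))) 0

/-- Directional (normal) derivative of u at x in the direction ν x. -/
noncomputable def dnu {n : ℕ} (ν : EuclideanSpace ℝ (Fin n) → EuclideanSpace ℝ (Fin n))
    (u : EuclideanSpace ℝ (Fin n) → ℂ) (x : EuclideanSpace ℝ (Fin n)) : ℂ :=
  deriv (fun t : ℝ => u (x + t • ν x)) 0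

/-- If Δξ = f·g in Ω \ D̄ with f ≥ 0 and f > 0 a.e., g harmonic with g = 0 on ∂D,
ξ = 0 on ∂D and ξ = ∂ξ/∂ν = 0 on ∂Ω, then g ≡ 0 in Ω \ D̄ (Green's second identity
on Ω \ D̄ being available as a hypothesis). -/
theorem stmt_3 {n : ℕ} (Ω D : Set (EuclideanSpace ℝ (Fin n)))
    (hΩo : IsOpen Ω) (hΩb : Bornology.IsBounded Ω) (hDo : IsOpen D)
    (hDΩ : closure D ⊆ Ω) (hconn : IsConnected (Ω \ closure D))
    (ξ g : EuclideanSpace ℝ (Fin n) → ℂ) (f : EuclideanSpace ℝ (Fin n) → ℝ)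
    (νΩ νD : EuclideanSpace ℝ (Fin n) → EuclideanSpace ℝ (Fin n))
    (σΩ σD : Measure (EuclideanSpace ℝ (Fin n)))
    (hσΩ : ∀ᵐ x ∂σΩ, x ∈ frontier Ω) (hσD : ∀ᵐ x ∂σD, x ∈ frontier D)
    -- the PDE Δξ = g·f in Ω \ D̄
    (hΔξ : ∀ x ∈ Ω \ closure D, lap ξ x = g x * (f x : ℂ))
    -- g harmonic in Ω \ D̄, continuous there, vanishing on ∂D
    (hgharm : ∀ x ∈ Ω \ closure D, lap g x = 0)
    (hgcont : ContinuousOn g (Ω \ closure D))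
    (hgD : ∀ x ∈ frontier D, g x = 0)
    -- boundary conditions for ξ
    (hξD : ∀ x ∈ frontier D, ξ x = 0)
    (hξΩ : ∀ x ∈ frontier Ω, ξ x = 0)
    (hξνΩ : ∀ x ∈ frontier Ω, dnu νΩ ξ x = 0)
    -- f is real-valued, nonnegative, and positive a.e.
    (hf0 : ∀ x ∈ Ω \ closure D, 0 ≤ f x)
    (hfpos : ∀ᵐ x ∂(volume.restrict (Ω \ closure D)), 0 < f x)
    (hint : IntegrableOn (fun x => f x * ‖g x‖ ^ 2) (Ω \ closure D) volume)
    -- Green's second identity on Ω \ D̄ for the pair (ξ, ḡ)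
    (hGreen : ∫ x in Ω \ closure D,
          (lap ξ x * (starRingEnd ℂ) (g x) - ξ x * (starRingEnd ℂ) (lap g x)) ∂volume
        = (∫ x, (dnu νΩ ξ x * (starRingEnd ℂ) (g x)
              - ξ x * (starRingEnd ℂ) (dnu νΩ g x)) ∂σΩ)
          - ∫ x, (dnu νD ξ x * (starRingEnd ℂ) (g x)
              - ξ x * (starRingEnd ℂ) (dnu νD g x)) ∂σD) :
    ∀ x ∈ Ω \ closure D, g x = 0 := by

  intro x hx
  set S := Ω \ closure D with hS
  have hSopen : IsOpen S := hΩo.sdiff isClosed_closure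
  have hSmeas : MeasurableSet S := hSopen.measurableSet
  -- boundary integrals vanish
  have hbΩ : (∫ x, (dnu νΩ ξ x * (starRingEnd ℂ) (g x)
              - ξ x * (starRingEnd ℂ) (dnu νΩ g x)) ∂σΩ) = 0 := by
    refine integral_eq_zero_of_ae ?_
    filter_upwards [hσΩ] with y hy
    simp [hξνΩ y hy, hξΩ y hy]
  have hbD : (∫ x, (dnu νD ξ x * (starRingEnd ℂ) (g x)
              - ξ x * (starRingEnd ℂ) (dnu νD g x)) ∂σD) = 0 := by
    refine integral_eq_zero_of_ae ?_
    filter_upwards [hσD] with y hy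
    simp [hgD y hy, hξD y hy]
  -- rewrite LHS integrand
  have hcongr : ∫ y in S,
      (lap ξ y * (starRingEnd ℂ) (g y) - ξ y * (starRingEnd ℂ) (lap g y)) ∂volume
      = ∫ y in S, ((f y * ‖g y‖ ^ 2 : ℝ) : ℂ) ∂volume := by
    refine setIntegral_congr_fun hSmeas ?_
    intro y hy
    have h1 := hΔξ y hy
    have h2 := hgharm y hy
    simp only [h1, h2, map_zero, mul_zero, sub_zero]
    rw [mul_comm (g y) ((f y : ℂ)), mul_assoc, Complex.mul_conj]
    push_cast [Complex.normSq_eq_norm_sq]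
    ring
  have hzero : ∫ y in S, ((f y * ‖g y‖ ^ 2 : ℝ) : ℂ) ∂volume = 0 := by
    rw [← hcongr, hGreen, hbΩ, hbD, sub_zero]
  have hzeroR : ∫ y in S, f y * ‖g y‖ ^ 2 ∂volume = 0 := by
    have := integral_ofReal (𝕜 := ℂ) (f := fun y => f y * ‖g y‖ ^ 2)
      (μ := volume.restrict S)
    simpa using this.symm.trans hzero
  -- nonnegativity a.e.
  have hae_nonneg : 0 ≤ᵐ[volume.restrict S] fun y => f y * ‖g y‖ ^ 2 := by
    filter_upwards [self_mem_ae_restrict hSmeas] with y hy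
    exact mul_nonneg (hf0 y hy) (by positivity)
  have haez : (fun y => f y * ‖g y‖ ^ 2) =ᵐ[volume.restrict S] 0 :=
    (integral_eq_zero_iff_of_nonneg_ae hae_nonneg hint).mp hzeroR
  have hgz : ∀ᵐ y ∂(volume.restrict S), g y = 0 := by
    filter_upwards [haez, hfpos] with y h1 h2
    have : ‖g y‖ ^ 2 = 0 := by
      by_contra h
      exact h (by
        have := mul_eq_zero.mp h1
        rcases this with h | h
        · exact absurd h h2.ne'
        · exact h)
    simpa using pow_eq_zero_iff (n := 2) (by norm_num) |>.mp this
  -- continuity argument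
  by_contra hgx
  have hT : IsOpen (S ∩ g ⁻¹' ({0}ᶜ)) :=
    hgcont.isOpen_inter_preimage hSopen (isOpen_compl_singleton)
  have hxT : x ∈ S ∩ g ⁻¹' ({0}ᶜ) := ⟨hx, hgx⟩
  have hpos : 0 < volume (S ∩ g ⁻¹' ({0}ᶜ)) :=
    hT.measure_pos volume ⟨x, hxT⟩
  have : volume (S ∩ g ⁻¹' ({0}ᶜ)) = 0 := by
    have h0 : volume.restrict S {y | g y ≠ 0} = 0 := by
      rw [← compl_compl {y | g y ≠ 0}]
      refine ae_iff.mp ?_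
      filter_upwards [hgz] with y hy
      simp [hy]
    have := measure_mono_null (μ := volume.restrict S)
      (s := S ∩ g ⁻¹' ({0}ᶜ)) (t := {y | g y ≠ 0}) (fun y hy => hy.2) h0
    rwa [Measure.restrict_apply' hSmeas, Set.inter_eq_left.mpr Set.inter_subset_left] at this
  exact absurd this hpos.ne'
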